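/- arXiv:1701.07962 — 2 statements merged into one kernel-verified Lean document; each statement's English description precedes it below -/
import Mathlib

section
/- (Change of variable formula.) Let T be a compact metric space, X a Hilbert space, R ∈ L(X), ω : T → T continuous, and μ ∈ cabv(X). For every continuous f : T → X one has ∫ f d(R ∘ ω(μ)) = ∫ (R* ∘ f ∘ ω) dμ, where the integral of a simple function ∑ φ_{A_i} x_i against μ is ∑ ⟨x_i, μ(A_i)⟩ and is extended by uniform limits to totally measurable functions. -/
open MeasureTheory Filter Topology Set

noncomputable section

/-- A finite Borel partition of the whole space. -/
def IsBorelPartition {T : Type*} [MeasurableSpace T] (P : Finset (Set T)) : Prop :=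
  (∀ A ∈ P, MeasurableSet A) ∧ ((P : Set (Set T)).PairwiseDisjoint id) ∧
    ⋃₀ (P : Set (Set T)) = Set.univ

/-- Total variation of a vector measure, as an extended real. -/
def evar {T X : Type*} [MeasurableSpace T] [NormedAddCommGroup X]
    (μ : VectorMeasure T X) : ENNReal :=
  ⨆ (P : Finset (Set T)) (_ : IsBorelPartition P), ∑ A ∈ P, (‖μ A‖₊ : ENNReal)

/-- Bounded variation. -/
def BddVar {T X : Type*} [MeasurableSpace T] [NormedAddCommGroup X]
    (μ : VectorMeasure T X) : Prop := evar μ ≠ ⊤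

/-- The variational norm. -/
def varNorm {T X : Type*} [MeasurableSpace T] [NormedAddCommGroup X]
    (μ : VectorMeasure T X) : ℝ := (evar μ).toReal

/-- Composition of a bounded operator with a vector measure. -/
def opComp {T X Y 𝕜 : Type*} [MeasurableSpace T] [NontriviallyNormedField 𝕜]
    [NormedAddCommGroup X] [NormedSpace 𝕜 X] [NormedAddCommGroup Y] [NormedSpace 𝕜 Y]
    (R : X →L[𝕜] Y) (μ : VectorMeasure T X) : VectorMeasure T Y :=
  μ.mapRange R.toLinearMap.toAddMonoidHom R.continuous

/-- The Markov-type operator generated by operators `R i` and maps `ω i`. -/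
def markovH {T X 𝕜 : Type*} [MeasurableSpace T] [NontriviallyNormedField 𝕜]
    [NormedAddCommGroup X] [NormedSpace 𝕜 X] {M : ℕ}
    (R : Fin M → X →L[𝕜] X) (ω : Fin M → T → T) (μ : VectorMeasure T X) :
    VectorMeasure T X :=
  ∑ i, opComp (R i) (μ.map (ω i))

/-- Simple (finitely-valued, measurable) function. -/
def IsSimpleFn {T X : Type*} [MeasurableSpace T] (g : T → X) : Prop :=
  (Set.range g).Finite ∧ ∀ x : X, MeasurableSet (g ⁻¹' {x})

/-- Integral of a simple function against a vector measure. -/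
def simpleIntegral (𝕜 : Type*) {T X : Type*} [RCLike 𝕜] [MeasurableSpace T]
    [NormedAddCommGroup X] [InnerProductSpace 𝕜 X] (μ : VectorMeasure T X) (g : T → X) : 𝕜 :=
  ∑ᶠ x : X, (inner 𝕜 x (μ (g ⁻¹' {x})) : 𝕜)

/-- `I` is the (uniform, sesquilinear) integral of `f` with respect to `μ`. -/
def HasUIntegral (𝕜 : Type*) {T X : Type*} [RCLike 𝕜] [MeasurableSpace T]
    [NormedAddCommGroup X] [InnerProductSpace 𝕜 X] (μ : VectorMeasure T X)
    (f : T → X) (I : 𝕜) : Prop :=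
  ∀ g : ℕ → T → X, (∀ n, IsSimpleFn (g n)) → TendstoUniformly g f atTop →
    Tendsto (fun n => simpleIntegral 𝕜 μ (g n)) atTop (nhds I)

/-- The uniform integral (defaulting to `0` when it does not exist). -/
def uIntegral (𝕜 : Type*) {T X : Type*} [RCLike 𝕜] [MeasurableSpace T]
    [NormedAddCommGroup X] [InnerProductSpace 𝕜 X] (μ : VectorMeasure T X) (f : T → X) : 𝕜 :=
  letI := Classical.propDecidable
  if h : ∃ I, HasUIntegral 𝕜 μ f I then h.choose else 0

/-- The Monge–Kantorovich norm. -/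
def mkNorm (𝕜 : Type*) {T X : Type*} [RCLike 𝕜] [PseudoMetricSpace T] [MeasurableSpace T]
    [NormedAddCommGroup X] [InnerProductSpace 𝕜 X] (μ : VectorMeasure T X) : ℝ :=
  sSup {s | ∃ (f : T → X) (L : NNReal), LipschitzWith L f ∧ (∀ t, ‖f t‖ + (L : ℝ) ≤ 1) ∧
    s = ‖uIntegral 𝕜 μ f‖}

/-- The modified Monge–Kantorovich norm. -/
def mkNormStar (𝕜 : Type*) {T X : Type*} [RCLike 𝕜] [PseudoMetricSpace T] [MeasurableSpace T]
    [NormedAddCommGroup X] [InnerProductSpace 𝕜 X] (μ : VectorMeasure T X) : ℝ :=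
  sSup {s | ∃ f : T → X, LipschitzWith 1 f ∧ s = ‖uIntegral 𝕜 μ f‖}

/-- The `X`-valued Dirac measure `B ↦ δ_t(B) • x`. -/
def diracVM {T : Type*} [MeasurableSpace T] {𝕜 X : Type*} [RCLike 𝕜]
    [NormedAddCommGroup X] [NormedSpace 𝕜 X] (t : T) (x : X) : VectorMeasure T X :=
  ((Measure.dirac t).toSignedMeasure).mapRange
    { toFun := fun c : ℝ => (c : 𝕜) • x
      map_zero' := by simp
      map_add' := fun a b => by push_cast; rw [add_smul] }
    (RCLike.continuous_ofReal.smul continuous_const)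

end


section AuxLemmas

open MeasureTheory Filter Topology Set

variable {T : Type*} [MeasurableSpace T] {X : Type*} [NormedAddCommGroup X]

/-- Finset additivity of a vector measure on pairwise disjoint measurable sets. -/
lemma vm_sum_of_disjoint {ι : Type*} (ν : VectorMeasure T X) (s : Finset ι) (A : ι → Set T)
    (hm : ∀ i ∈ s, MeasurableSet (A i)) (hd : (↑s : Set ι).PairwiseDisjoint A) :
    ν (⋃ i ∈ s, A i) = ∑ i ∈ s, ν (A i) := by
  classical
  induction s using Finset.induction_on with
  | empty => simp
  | @insert a s ha ih =>
    have hmem : ∀ i ∈ s, MeasurableSet (A i) := fun i hi => hm i (Finset.mem_insert_of_mem hi)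
    have hds : (↑s : Set ι).PairwiseDisjoint A :=
      hd.subset (by rw [Finset.coe_insert]; exact Set.subset_insert _ _)
    have hdisj : Disjoint (A a) (⋃ i ∈ s, A i) := by
      rw [Set.disjoint_iUnion₂_right]
      intro i hi
      exact hd (by simp) (by simp [hi]) (by rintro rfl; exact ha hi)
    rw [Finset.set_biUnion_insert, VectorMeasure.of_union hdisj (hm a (Finset.mem_insert_self a s))
      (Finset.measurableSet_biUnion s hmem), Finset.sum_insert ha, ih hmem hds]

/-- A finite disjoint family bounds the variation from below. -/
lemma sum_nnnorm_le_evar (μ : VectorMeasure T X) {ι : Type*} (s : Finset ι) (A : ι → Set T)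
    (hm : ∀ i ∈ s, MeasurableSet (A i)) (hd : (↑s : Set ι).PairwiseDisjoint A) :
    ∑ i ∈ s, (‖μ (A i)‖₊ : ENNReal) ≤ evar μ := by
  classical
  set s' := s.filter (fun i => A i ≠ ∅) with hs'
  have hsub : s' ⊆ s := Finset.filter_subset _ _
  have hsum : ∑ i ∈ s, (‖μ (A i)‖₊ : ENNReal) = ∑ i ∈ s', (‖μ (A i)‖₊ : ENNReal) := by
    refine (Finset.sum_filter_of_ne fun i hi hne => ?_).symm
    intro hemp
    rw [hemp, VectorMeasure.empty] at hne
    simp at hne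
  have hinj : ∀ i ∈ s', ∀ j ∈ s', A i = A j → i = j := by
    intro i hi j hj hij
    by_contra hne
    have hdisj : Disjoint (A i) (A j) := hd (hsub hi) (hsub hj) hne
    rw [hij, disjoint_self] at hdisj
    exact (Finset.mem_filter.1 hj).2 hdisj
  set Q := s'.image A with hQ
  have hQsum : ∑ i ∈ s', (‖μ (A i)‖₊ : ENNReal) = ∑ B ∈ Q, (‖μ B‖₊ : ENNReal) := by
    rw [hQ, Finset.sum_image hinj]
  have hQmem : ∀ B ∈ Q, ∃ i ∈ s, A i = B := by
    intro B hB
    obtain ⟨i, hi, rfl⟩ := Finset.mem_image.1 hB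
    exact ⟨i, hsub hi, rfl⟩
  have hQmeas : ∀ B ∈ Q, MeasurableSet B := by
    intro B hB; obtain ⟨i, hi, rfl⟩ := hQmem B hB; exact hm i hi
  set U : Set T := ⋃ B ∈ Q, B with hU
  set P := insert Uᶜ Q with hP
  have hPart : IsBorelPartition P := by
    refine ⟨?_, ?_, ?_⟩
    · intro B hB
      rcases Finset.mem_insert.1 hB with rfl | hB
      · exact (Finset.measurableSet_biUnion Q hQmeas).compl
      · exact hQmeas B hB
    · rw [hP, Finset.coe_insert]
      refine Set.PairwiseDisjoint.insert ?_ ?_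
      · intro B hB B' hB' hne
        obtain ⟨i, hi, rfl⟩ := Finset.mem_image.1 hB
        obtain ⟨j, hj, rfl⟩ := Finset.mem_image.1 hB'
        exact hd (hsub hi) (hsub hj) (by rintro rfl; exact hne rfl)
      · intro B hB _
        have hBU : B ⊆ U := by
          rw [hU]
          exact Set.subset_biUnion_of_mem (u := fun B => B) hB
        exact (disjoint_compl_left.mono_right hBU : Disjoint (id Uᶜ) (id B))
    · rw [hP, Finset.coe_insert, Set.sUnion_insert]
      have : ⋃₀ (↑Q : Set (Set T)) = U := by
        rw [hU, Set.sUnion_eq_biUnion]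
        ext t
        simp
      rw [this, Set.compl_union_self]
  calc ∑ i ∈ s, (‖μ (A i)‖₊ : ENNReal)
      = ∑ B ∈ Q, (‖μ B‖₊ : ENNReal) := by rw [hsum, hQsum]
    _ ≤ ∑ B ∈ P, (‖μ B‖₊ : ENNReal) :=
        Finset.sum_le_sum_of_subset (Finset.subset_insert _ _)
    _ ≤ evar μ := by
        rw [evar]
        exact le_iSup₂_of_le P hPart le_rfl

lemma sum_norm_le_varNorm (μ : VectorMeasure T X) (hμ : BddVar μ) {ι : Type*} (s : Finset ι)
    (A : ι → Set T) (hm : ∀ i ∈ s, MeasurableSet (A i))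
    (hd : (↑s : Set ι).PairwiseDisjoint A) :
    ∑ i ∈ s, ‖μ (A i)‖ ≤ varNorm μ := by
  have h1 := sum_nnnorm_le_evar μ s A hm hd
  have h2 : (∑ i ∈ s, (‖μ (A i)‖₊ : ENNReal)).toReal = ∑ i ∈ s, ‖μ (A i)‖ := by
    rw [ENNReal.toReal_sum (fun a _ => ENNReal.coe_ne_top)]
    simp [coe_nnnorm]
  rw [← h2, varNorm]
  exact ENNReal.toReal_mono hμ h1

end AuxLemmas

section AuxLemmas2

open MeasureTheory Filter Topology Set

variable {T : Type*} [MeasurableSpace T] {𝕜 X : Type*} [RCLike 𝕜]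
  [NormedAddCommGroup X] [InnerProductSpace 𝕜 X]

/-- Representation of the simple integral of `φ ∘ κ` through the fibers of `κ`. -/
lemma fiber_repr {α : Type*} (ν : VectorMeasure T X) (s : Finset α) (κ : T → α)
    (hmem : ∀ t, κ t ∈ s) (hmeas : ∀ a, MeasurableSet (κ ⁻¹' {a})) (φ : α → X) :
    IsSimpleFn (fun t => φ (κ t)) ∧
      simpleIntegral 𝕜 ν (fun t => φ (κ t)) =
        ∑ a ∈ s, (inner 𝕜 (φ a) (ν (κ ⁻¹' {a})) : 𝕜) := by
  classical
  set g : T → X := fun t => φ (κ t) with hg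
  have hpre : ∀ x : X, g ⁻¹' {x} = ⋃ a ∈ s.filter (fun a => φ a = x), κ ⁻¹' {a} := by
    intro x
    ext t
    simp only [hg, Set.mem_preimage, Set.mem_singleton_iff, Set.mem_iUnion, Finset.mem_filter]
    constructor
    · intro h
      exact ⟨κ t, ⟨⟨hmem t, h⟩, rfl⟩⟩
    · rintro ⟨a, ⟨⟨-, ha⟩, hta⟩⟩
      rw [hta, ha]
  have hdisj : ∀ (u : Finset α), (↑u : Set α).PairwiseDisjoint (fun a => κ ⁻¹' {a}) := by
    intro u a _ b _ hab
    rw [Function.onFun, Set.disjoint_left]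
    rintro t (hta : κ t = a) (htb : κ t = b)
    exact hab (hta ▸ htb ▸ rfl)
  have hsimple : IsSimpleFn g := by
    constructor
    · refine (s.image φ).finite_toSet.subset ?_
      rintro _ ⟨t, rfl⟩
      exact Finset.mem_coe.2 (Finset.mem_image_of_mem φ (hmem t))
    · intro x
      rw [hpre x]
      exact Finset.measurableSet_biUnion _ (fun a _ => hmeas a)
  refine ⟨hsimple, ?_⟩
  have hsupp : Function.support (fun x : X => (inner 𝕜 x (ν (g ⁻¹' {x})) : 𝕜)) ⊆
      ↑(s.image φ) := by
    intro x hx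
    by_contra hxmem
    have hempty : g ⁻¹' {x} = ∅ := by
      ext t
      simp only [Set.mem_preimage, Set.mem_singleton_iff, Set.mem_empty_iff_false,
        iff_false]
      intro hgt
      exact hxmem (Finset.mem_coe.2 (Finset.mem_image.2 ⟨κ t, hmem t, hgt⟩))
    refine hx ?_
    show (inner 𝕜 x (ν (g ⁻¹' {x})) : 𝕜) = 0
    rw [hempty, VectorMeasure.empty, inner_zero_right]
  rw [simpleIntegral, finsum_eq_finset_sum_of_support_subset _ hsupp]
  have hterm : ∀ x ∈ s.image φ, (inner 𝕜 x (ν (g ⁻¹' {x})) : 𝕜) =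
      ∑ a ∈ s.filter (fun a => φ a = x), (inner 𝕜 (φ a) (ν (κ ⁻¹' {a})) : 𝕜) := by
    intro x _
    rw [hpre x, vm_sum_of_disjoint ν _ _ (fun a _ => hmeas a) (hdisj _), inner_sum]
    refine Finset.sum_congr rfl fun a ha => ?_
    rw [(Finset.mem_filter.1 ha).2]
  rw [Finset.sum_congr rfl hterm]
  exact Finset.sum_fiberwise_of_maps_to (fun a ha => Finset.mem_image_of_mem φ ha) _

lemma simpleIntegral_zero_fn (ν : VectorMeasure T X) :
    simpleIntegral 𝕜 ν (fun _ => (0 : X)) = 0 := by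
  refine finsum_eq_zero_of_forall_eq_zero fun x => ?_
  by_cases hx : x = 0
  · rw [hx, inner_zero_left]
  · have : (fun _ : T => (0 : X)) ⁻¹' {x} = ∅ := by
      ext t
      simp [Ne.symm hx]
    rw [this, VectorMeasure.empty, inner_zero_right]

lemma isSimpleFn_zero : IsSimpleFn (fun _ : T => (0 : X)) := by
  constructor
  · exact (Set.finite_singleton 0).subset (by rintro _ ⟨t, rfl⟩; simp)
  · intro x
    by_cases hx : x = 0
    · have : (fun _ : T => (0 : X)) ⁻¹' {x} = Set.univ := by ext t; simp [hx]
      rw [this]; exact MeasurableSet.univ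
    · have : (fun _ : T => (0 : X)) ⁻¹' {x} = ∅ := by ext t; simp [Ne.symm hx]
      rw [this]; exact MeasurableSet.empty

/-- Uniform closeness of simple functions yields closeness of their integrals. -/
lemma diff_bound (ν : VectorMeasure T X) (hν : BddVar ν) {g h : T → X}
    (hg : IsSimpleFn g) (hh : IsSimpleFn h) {c : ℝ} (hc0 : 0 ≤ c)
    (hc : ∀ t, ‖g t - h t‖ ≤ c) :
    ‖simpleIntegral 𝕜 ν g - simpleIntegral 𝕜 ν h‖ ≤ c * varNorm ν := by
  classical
  set κ : T → X × X := fun t => (g t, h t) with hκ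
  have hrange : (Set.range κ).Finite := by
    refine ((hg.1.prod hh.1)).subset ?_
    rintro _ ⟨t, rfl⟩
    exact ⟨⟨t, rfl⟩, ⟨t, rfl⟩⟩
  set s := hrange.toFinset with hs
  have hmem : ∀ t, κ t ∈ s := fun t => hrange.mem_toFinset.2 ⟨t, rfl⟩
  have hmeas : ∀ p : X × X, MeasurableSet (κ ⁻¹' {p}) := by
    intro p
    have : κ ⁻¹' {p} = g ⁻¹' {p.1} ∩ h ⁻¹' {p.2} := by
      ext t
      simp [hκ, Prod.ext_iff]
    rw [this]
    exact (hg.2 p.1).inter (hh.2 p.2)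
  obtain ⟨-, hrg⟩ := fiber_repr (𝕜 := 𝕜) ν s κ hmem hmeas Prod.fst
  obtain ⟨-, hrh⟩ := fiber_repr (𝕜 := 𝕜) ν s κ hmem hmeas Prod.snd
  have hgid : simpleIntegral 𝕜 ν g = ∑ p ∈ s, (inner 𝕜 p.1 (ν (κ ⁻¹' {p})) : 𝕜) := hrg
  have hhid : simpleIntegral 𝕜 ν h = ∑ p ∈ s, (inner 𝕜 p.2 (ν (κ ⁻¹' {p})) : 𝕜) := hrh
  rw [hgid, hhid, ← Finset.sum_sub_distrib]
  have hub : ∀ p ∈ s, ‖(inner 𝕜 p.1 (ν (κ ⁻¹' {p})) : 𝕜) - inner 𝕜 p.2 (ν (κ ⁻¹' {p}))‖ ≤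
      c * ‖ν (κ ⁻¹' {p})‖ := by
    intro p hp
    rw [← inner_sub_left]
    refine (norm_inner_le_norm _ _).trans ?_
    refine mul_le_mul_of_nonneg_right ?_ (norm_nonneg _)
    obtain ⟨t, ht⟩ := hrange.mem_toFinset.1 hp
    rw [← ht]
    exact hc t
  calc ‖∑ p ∈ s, ((inner 𝕜 p.1 (ν (κ ⁻¹' {p})) : 𝕜) - inner 𝕜 p.2 (ν (κ ⁻¹' {p})))‖
      ≤ ∑ p ∈ s, ‖(inner 𝕜 p.1 (ν (κ ⁻¹' {p})) : 𝕜) - inner 𝕜 p.2 (ν (κ ⁻¹' {p}))‖ :=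
        norm_sum_le _ _
    _ ≤ ∑ p ∈ s, c * ‖ν (κ ⁻¹' {p})‖ := Finset.sum_le_sum hub
    _ = c * ∑ p ∈ s, ‖ν (κ ⁻¹' {p})‖ := by rw [Finset.mul_sum]
    _ ≤ c * varNorm ν := by
        refine mul_le_mul_of_nonneg_left ?_ hc0
        refine sum_norm_le_varNorm ν hν s _ (fun p _ => hmeas p) ?_
        intro p _ q _ hpq
        rw [Function.onFun, Set.disjoint_left]
        rintro t (htp : κ t = p) (htq : κ t = q)
        exact hpq (htp ▸ htq ▸ rfl)

lemma norm_simpleIntegral_le (ν : VectorMeasure T X) (hν : BddVar ν) {g : T → X}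
    (hg : IsSimpleFn g) {c : ℝ} (hc0 : 0 ≤ c) (hc : ∀ t, ‖g t‖ ≤ c) :
    ‖simpleIntegral 𝕜 ν g‖ ≤ c * varNorm ν := by
  have := diff_bound (𝕜 := 𝕜) ν hν hg isSimpleFn_zero hc0 (by simpa using hc)
  rwa [simpleIntegral_zero_fn, sub_zero] at this

/-- If some simple sequence converging uniformly to `f` has converging integrals, then `f` has
that value as uniform integral. -/
lemma hasUIntegral_of_seq (ν : VectorMeasure T X) (hν : BddVar ν) (f : T → X)
    (g : ℕ → T → X) (hg : ∀ n, IsSimpleFn (g n)) (hgu : TendstoUniformly g f Filter.atTop)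
    (I : 𝕜) (hI : Filter.Tendsto (fun n => simpleIntegral 𝕜 ν (g n)) Filter.atTop (nhds I)) :
    HasUIntegral 𝕜 ν f I := by
  intro G hG hGu
  rw [Metric.tendsto_atTop] at hI ⊢
  intro ε hε
  set V := varNorm ν with hV
  have hV0 : 0 ≤ V := ENNReal.toReal_nonneg
  have hε' : 0 < ε / (4 * (V + 1)) := by positivity
  obtain ⟨N1, h1⟩ := hI (ε / 2) (by positivity)
  obtain ⟨N2, h2⟩ := Filter.eventually_atTop.1 ((Metric.tendstoUniformly_iff.1 hgu) _ hε')
  obtain ⟨N3, h3⟩ := Filter.eventually_atTop.1 ((Metric.tendstoUniformly_iff.1 hGu) _ hε')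
  refine ⟨max N1 (max N2 N3), fun n hn => ?_⟩
  have hn1 : N1 ≤ n := le_trans (le_max_left _ _) hn
  have hn2 : N2 ≤ n := le_trans ((le_max_left _ _).trans (le_max_right _ _)) hn
  have hn3 : N3 ≤ n := le_trans ((le_max_right _ _).trans (le_max_right _ _)) hn
  have hdGg : dist (simpleIntegral 𝕜 ν (G n)) (simpleIntegral 𝕜 ν (g n)) ≤
      (2 * (ε / (4 * (V + 1)))) * V := by
    rw [dist_eq_norm]
    refine diff_bound ν hν (hG n) (hg n) (by positivity) fun t => ?_
    have e2 := h2 n hn2 t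
    have e3 := h3 n hn3 t
    calc ‖G n t - g n t‖ = dist (G n t) (g n t) := (dist_eq_norm _ _).symm
      _ ≤ dist (G n t) (f t) + dist (f t) (g n t) := dist_triangle _ _ _
      _ ≤ ε / (4 * (V + 1)) + ε / (4 * (V + 1)) := by
          rw [dist_comm (G n t) (f t)]
          exact add_le_add e3.le e2.le
      _ = 2 * (ε / (4 * (V + 1))) := by ring
  calc dist (simpleIntegral 𝕜 ν (G n)) I
      ≤ dist (simpleIntegral 𝕜 ν (G n)) (simpleIntegral 𝕜 ν (g n)) +
        dist (simpleIntegral 𝕜 ν (g n)) I := dist_triangle _ _ _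
    _ < (2 * (ε / (4 * (V + 1)))) * V + ε / 2 := by
        exact add_lt_add_of_le_of_lt hdGg (h1 n hn1)
    _ ≤ ε := by
        have : (2 * (ε / (4 * (V + 1)))) * V ≤ ε / 2 := by
          rw [mul_comm (2:ℝ) (ε / (4 * (V + 1))), mul_assoc, div_mul_eq_mul_div,
            div_le_div_iff₀ (by positivity) (by norm_num : (0:ℝ) < 2)]
          nlinarith
        linarith

end AuxLemmas2

/-- change of variable formula: for `R ∈ L(X)`, `ω : T → T` continuous and
`μ ∈ cabv(X)`, every continuous `f : T → X` satisfies
`∫ f d(R ∘ ω(μ)) = ∫ (R* ∘ f ∘ ω) dμ` (both uniform integrals exist and are equal). -/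
theorem change_of_variable
    {T : Type*} [MetricSpace T] [CompactSpace T] [MeasurableSpace T] [BorelSpace T]
    {𝕜 X : Type*} [RCLike 𝕜] [NormedAddCommGroup X] [InnerProductSpace 𝕜 X] [CompleteSpace X]
    (R : X →L[𝕜] X) (ω : T → T) (hω : Continuous ω)
    (μ : VectorMeasure T X) (hμ : BddVar μ) (f : T → X) (hf : Continuous f) :
    ∃ I : 𝕜, HasUIntegral 𝕜 (opComp R (μ.map ω)) f I ∧
      HasUIntegral 𝕜 μ (fun t => ContinuousLinearMap.adjoint R (f (ω t))) I := by
  classical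
  set A := ContinuousLinearMap.adjoint R with hA
  set ν := opComp R (μ.map ω) with hνdef
  have hνapp : ∀ {B : Set T}, MeasurableSet B → ν B = R (μ (ω ⁻¹' B)) := by
    intro B hB
    rw [hνdef]
    show (μ.map ω).mapRange R.toLinearMap.toAddMonoidHom R.continuous B = _
    exact congrArg R (VectorMeasure.map_apply μ hω.measurable hB)
  cases isEmpty_or_nonempty T with
  | inl hT =>
    have hgen : ∀ (ρ : VectorMeasure T X) (F : T → X), HasUIntegral 𝕜 ρ F 0 := by
      intro ρ F G hG hGu
      have hzero : ∀ n, simpleIntegral 𝕜 ρ (G n) = (0 : 𝕜) := by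
        intro n
        refine finsum_eq_zero_of_forall_eq_zero fun x => ?_
        have he : (G n) ⁻¹' {x} = ∅ := Subsingleton.elim _ _
        rw [he, VectorMeasure.empty, inner_zero_right]
      simpa [hzero] using (tendsto_const_nhds : Tendsto (fun _ : ℕ => (0:𝕜)) atTop (nhds 0))
    exact ⟨0, hgen ν f, hgen μ _⟩
  | inr hT =>
    -- bounded variation of ν
    have hνB : BddVar ν := by
      have hle : evar ν ≤ (‖R‖₊ : ENNReal) * evar μ := by
        rw [evar]
        refine iSup₂_le fun P hP => ?_
        calc ∑ B ∈ P, (‖ν B‖₊ : ENNReal)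
            ≤ ∑ B ∈ P, (‖R‖₊ : ENNReal) * (‖μ (ω ⁻¹' B)‖₊ : ENNReal) := by
              refine Finset.sum_le_sum fun B hB => ?_
              rw [hνapp (hP.1 B hB)]
              rw [← ENNReal.coe_mul]
              exact ENNReal.coe_le_coe.2 (R.le_opNNNorm _)
          _ = (‖R‖₊ : ENNReal) * ∑ B ∈ P, (‖μ (ω ⁻¹' B)‖₊ : ENNReal) := by
              rw [Finset.mul_sum]
          _ ≤ (‖R‖₊ : ENNReal) * evar μ := by
              refine mul_le_mul_right ?_ _
              refine sum_nnnorm_le_evar μ P (fun B => ω ⁻¹' B)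
                (fun B hB => (hP.1 B hB).preimage hω.measurable) ?_
              intro B hB C hC hBC
              exact Disjoint.preimage ω (hP.2.1 hB hC hBC)
      exact ne_top_of_le_ne_top (ENNReal.mul_ne_top ENNReal.coe_ne_top hμ) hle
    -- dense sequence and uniform continuity
    set u := TopologicalSpace.denseSeq T with hu_def
    have hu : DenseRange u := TopologicalSpace.denseRange_denseSeq T
    have hfu : UniformContinuous f := CompactSpace.uniformContinuous_of_continuous hf
    rw [Metric.uniformContinuous_iff] at hfu
    choose δ hδ0 hδ using fun n : ℕ => hfu (1 / ((n : ℝ) + 1)) (by positivity)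
    have hex : ∀ n t, ∃ j, dist t (u j) < δ n := fun n t => hu.exists_dist_lt t (hδ0 n)
    set κ : ℕ → T → ℕ := fun n t => Nat.find (hex n t) with hκdef
    have hκspec : ∀ n t, dist t (u (κ n t)) < δ n := fun n t => Nat.find_spec (hex n t)
    have hκmeas : ∀ n j, MeasurableSet (κ n ⁻¹' {j}) := by
      intro n j
      have hset : κ n ⁻¹' {j} =
          Metric.ball (u j) (δ n) ∩ ⋂ i ∈ Set.Iio j, (Metric.ball (u i) (δ n))ᶜ := by
        ext t
        simp only [Set.mem_preimage, Set.mem_singleton_iff, hκdef, Nat.find_eq_iff,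
          Set.mem_inter_iff, Metric.mem_ball, Set.mem_iInter, Set.mem_compl_iff, Set.mem_Iio]
      rw [hset]
      exact measurableSet_ball.inter
        (MeasurableSet.biInter (Set.to_countable _) fun i _ => measurableSet_ball.compl)
    -- uniform finite bound on the index
    have hcover : ∀ n, ∃ N : ℕ, ∀ t, κ n t < N + 1 := by
      intro n
      obtain ⟨b, hb⟩ := isCompact_univ.elim_finite_subcover
        (fun j : ℕ => Metric.ball (u j) (δ n)) (fun j => Metric.isOpen_ball)
        (fun t _ => by
          obtain ⟨j, hj⟩ := hex n t
          exact Set.mem_iUnion.2 ⟨j, Metric.mem_ball.2 hj⟩)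
      refine ⟨b.sup id, fun t => ?_⟩
      obtain ⟨j, hjb, hjt⟩ := Set.mem_iUnion₂.1 (hb (Set.mem_univ t))
      have h1 : κ n t ≤ j := Nat.find_min' _ (Metric.mem_ball.1 hjt)
      exact Nat.lt_succ_of_le (h1.trans (Finset.le_sup (f := id) hjb))
    choose N hN using hcover
    -- the approximating simple functions
    set g : ℕ → T → X := fun n t => f (u (κ n t)) with hgdef
    have hrepr : ∀ n, IsSimpleFn (g n) ∧ simpleIntegral 𝕜 ν (g n)
        = ∑ j ∈ Finset.range (N n + 1), (inner 𝕜 (f (u j)) (ν (κ n ⁻¹' {j})) : 𝕜) :=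
      fun n => fiber_repr ν (Finset.range (N n + 1)) (κ n)
        (fun t => Finset.mem_range.2 (hN n t)) (hκmeas n) (fun j => f (u j))
    set h : ℕ → T → X := fun n t => A (g n (ω t)) with hhdef
    have hωκmeas : ∀ n j, MeasurableSet ((fun t => κ n (ω t)) ⁻¹' {j}) := by
      intro n j
      have : (fun t => κ n (ω t)) ⁻¹' {j} = ω ⁻¹' (κ n ⁻¹' {j}) := rfl
      rw [this]
      exact (hκmeas n j).preimage hω.measurable
    have hhrepr : ∀ n, IsSimpleFn (h n) ∧ simpleIntegral 𝕜 μ (h n)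
        = ∑ j ∈ Finset.range (N n + 1),
            (inner 𝕜 (A (f (u j))) (μ (ω ⁻¹' (κ n ⁻¹' {j}))) : 𝕜) :=
      fun n => fiber_repr μ (Finset.range (N n + 1)) (fun t => κ n (ω t))
        (fun t => Finset.mem_range.2 (hN n (ω t))) (hωκmeas n) (fun j => A (f (u j)))
    -- equality of the simple integrals
    have heq : ∀ n, simpleIntegral 𝕜 ν (g n) = simpleIntegral 𝕜 μ (h n) := by
      intro n
      rw [(hrepr n).2, (hhrepr n).2]
      refine Finset.sum_congr rfl fun j hj => ?_
      rw [hνapp (hκmeas n j), hA]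
      exact (ContinuousLinearMap.adjoint_inner_left R (μ (ω ⁻¹' (κ n ⁻¹' {j}))) (f (u j))).symm
    -- approximation estimates
    have happrox : ∀ n t, dist (f t) (g n t) < 1 / ((n : ℝ) + 1) :=
      fun n t => hδ n (hκspec n t)
    have hmono : ∀ (M n : ℕ), M ≤ n → (1 : ℝ) / ((n : ℝ) + 1) ≤ 1 / ((M : ℝ) + 1) := by
      intro M n hMn
      refine one_div_le_one_div_of_le (by positivity) ?_
      exact_mod_cast Nat.succ_le_succ hMn
    have hgu : TendstoUniformly g f Filter.atTop := by
      rw [Metric.tendstoUniformly_iff]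
      intro ε hε
      obtain ⟨M, hM⟩ := exists_nat_one_div_lt hε
      rw [Filter.eventually_atTop]
      exact ⟨M, fun n hn t => lt_of_lt_of_le (happrox n t) ((hmono M n hn).trans hM.le)⟩
    have hhu : TendstoUniformly h (fun t => A (f (ω t))) Filter.atTop := by
      rw [Metric.tendstoUniformly_iff]
      intro ε hε
      have hA0 : (0 : ℝ) ≤ ‖A‖ := norm_nonneg _
      have hε' : 0 < ε / (‖A‖ + 1) := by positivity
      obtain ⟨M, hM⟩ := exists_nat_one_div_lt hε'
      rw [Filter.eventually_atTop]
      refine ⟨M, fun n hn t => ?_⟩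
      have hd1 : dist (A (f (ω t))) (h n t) ≤ ‖A‖ * dist (f (ω t)) (g n (ω t)) :=
        A.lipschitz.dist_le_mul _ _
      have hd2 : dist (f (ω t)) (g n (ω t)) < ε / (‖A‖ + 1) :=
        lt_of_lt_of_le (happrox n (ω t)) ((hmono M n hn).trans hM.le)
      have hd3 : ‖A‖ * dist (f (ω t)) (g n (ω t)) ≤ (‖A‖ + 1) * dist (f (ω t)) (g n (ω t)) :=
        mul_le_mul_of_nonneg_right (by linarith) dist_nonneg
      have hd5 : (‖A‖ + 1) * dist (f (ω t)) (g n (ω t)) < (‖A‖ + 1) * (ε / (‖A‖ + 1)) :=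
        (mul_lt_mul_iff_right₀ (by linarith)).2 hd2
      have hd4 : (‖A‖ + 1) * (ε / (‖A‖ + 1)) = ε :=
        mul_div_cancel₀ ε (by positivity)
      linarith
    -- Cauchy sequence of integrals
    have hCauchy : CauchySeq (fun n => simpleIntegral 𝕜 ν (g n)) := by
      refine cauchySeq_of_le_tendsto_0
        (fun K => 2 / ((K : ℝ) + 1) * varNorm ν) (fun n m K hn hm => ?_) ?_
      · rw [dist_eq_norm]
        have hb : ∀ t, ‖g n t - g m t‖ ≤ 1 / ((K : ℝ) + 1) + 1 / ((K : ℝ) + 1) := by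
          intro t
          calc ‖g n t - g m t‖ = dist (g n t) (g m t) := (dist_eq_norm _ _).symm
            _ ≤ dist (g n t) (f t) + dist (f t) (g m t) := dist_triangle _ _ _
            _ ≤ 1 / ((n : ℝ) + 1) + 1 / ((m : ℝ) + 1) := by
                rw [dist_comm (g n t) (f t)]
                exact add_le_add (happrox n t).le (happrox m t).le
            _ ≤ 1 / ((K : ℝ) + 1) + 1 / ((K : ℝ) + 1) :=
                add_le_add (hmono K n hn) (hmono K m hm)
        have := diff_bound (𝕜 := 𝕜) ν hνB (hrepr n).1 (hrepr m).1 (by positivity) hb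
        calc ‖simpleIntegral 𝕜 ν (g n) - simpleIntegral 𝕜 ν (g m)‖
            ≤ (1 / ((K : ℝ) + 1) + 1 / ((K : ℝ) + 1)) * varNorm ν := this
          _ = 2 / ((K : ℝ) + 1) * varNorm ν := by ring
      · have h0 := (tendsto_one_div_add_atTop_nhds_zero_nat.const_mul (2 : ℝ)).mul_const
          (varNorm ν)
        simp only [mul_zero, zero_mul] at h0
        convert h0 using 2 with K
        ring
    obtain ⟨I, hI⟩ := cauchySeq_tendsto_of_complete hCauchy
    refine ⟨I, hasUIntegral_of_seq ν hνB f g (fun n => (hrepr n).1) hgu I hI, ?_⟩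
    refine hasUIntegral_of_seq μ hμ _ h (fun n => (hhrepr n).1) hhu I ?_
    have : (fun n => simpleIntegral 𝕜 μ (h n)) = fun n => simpleIntegral 𝕜 ν (g n) := by
      funext n
      exact (heq n).symm
    rw [this]
    exact hI
end

section
/- Let H(μ) = ∑_{i=1}^M R_i ∘ ω_i(μ) be the Markov-type operator on cabv(X). If μ(T) = 0 then H(μ)(T) = ∑_{i=1}^M R_i(0) = 0, so H restricts to an operator H₀ on cabv(X,0) = {μ ∈ cabv(X) : μ(T) = 0}. Moreover, with respect to the modified Monge–Kantorovich norm ‖μ‖*_MK = sup{|∫ f dμ| : f is 1-Lipschitz from T to X}, one has ‖H₀(μ)‖*_MK ≤ (∑_{i=1}^M ‖R_i‖ r_i) ‖μ‖*_MK. -/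
open MeasureTheory Filter Topology Set

namespace MKAux

open MeasureTheory Filter Topology Set

noncomputable section

variable {T : Type*} [MeasurableSpace T] {X : Type*} [NormedAddCommGroup X]

/-- Finite additivity of a vector measure over a finset of disjoint measurable sets. -/
theorem vm_sum_of_disjoint {ι : Type*} (μ : VectorMeasure T X) (s : Finset ι) (A : ι → Set T)
    (hm : ∀ i ∈ s, MeasurableSet (A i)) (hd : (s : Set ι).Pairwise (Function.onFun Disjoint A)) :
    μ (⋃ i ∈ s, A i) = ∑ i ∈ s, μ (A i) := by
  classical
  induction s using Finset.induction_on with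
  | empty => simp
  | insert _ _ hx ih =>
    rename_i a s
    rw [Finset.set_biUnion_insert, Finset.sum_insert hx,
      VectorMeasure.of_union ?_ (hm a (Finset.mem_insert_self a s))
        (Finset.measurableSet_biUnion s (fun i hi => hm i (Finset.mem_insert_of_mem hi))),
      ih (fun i hi => hm i (Finset.mem_insert_of_mem hi))
        (hd.mono (by intro x hx2; simp only [Finset.coe_insert, Set.mem_insert_iff]
                     exact Or.inr hx2))]
    · rw [Set.disjoint_iUnion_right]
      intro i
      rw [Set.disjoint_iUnion_right]
      intro hi
      exact hd (Finset.mem_insert_self a s) (Finset.mem_insert_of_mem hi)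
        (fun h => hx (h ▸ hi))

/-- The sum of norms of measures of a disjoint family is at most the variational norm. -/
theorem sum_norm_le_varNorm {ι : Type*} (μ : VectorMeasure T X) (hμ : BddVar μ)
    (s : Finset ι) (A : ι → Set T)
    (hm : ∀ i ∈ s, MeasurableSet (A i)) (hd : (s : Set ι).Pairwise (Function.onFun Disjoint A)) :
    ∑ i ∈ s, ‖μ (A i)‖ ≤ varNorm μ := by
  classical
  -- restrict to nonempty sets
  set s₁ : Finset ι := s.filter (fun i => A i ≠ ∅) with hs₁
  have hsub : s₁ ⊆ s := Finset.filter_subset _ _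
  have hsum : ∑ i ∈ s, ‖μ (A i)‖ = ∑ i ∈ s₁, ‖μ (A i)‖ := by
    refine (Finset.sum_subset hsub ?_).symm
    intro i hi hni
    have : A i = ∅ := by
      by_contra h
      exact hni (Finset.mem_filter.2 ⟨hi, h⟩)
    rw [this, VectorMeasure.empty, norm_zero]
  rw [hsum]
  -- the candidate partition
  set U : Set T := ⋃ i ∈ s₁, A i with hU
  have hUm : MeasurableSet U := Finset.measurableSet_biUnion _ (fun i hi => hm i (hsub hi))
  have hinj : Set.InjOn A s₁ := by
    intro i hi j hj hij
    by_contra hne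
    have hdisj := hd (hsub hi) (hsub hj) hne
    have h2 : Disjoint (A i) (A j) := hdisj
    rw [hij] at h2
    have : A j = ∅ := by simpa using disjoint_self.1 h2
    exact (Finset.mem_filter.1 hj).2 this
  set P : Finset (Set T) := insert Uᶜ (s₁.image A) with hP
  have hmemP : ∀ B ∈ s₁.image A, B ∈ P := fun B hB => Finset.mem_insert_of_mem hB
  have hpart : IsBorelPartition P := by
    refine ⟨?_, ?_, ?_⟩
    · intro B hB
      rcases Finset.mem_insert.1 hB with h | h
      · exact h ▸ hUm.compl
      · obtain ⟨i, hi, rfl⟩ := Finset.mem_image.1 h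
        exact hm i (hsub hi)
    · intro B hB C hC hne
      show Disjoint B C
      simp only [hP, Finset.coe_insert, Set.mem_insert_iff, Finset.coe_image, Set.mem_image] at hB hC
      have hsubU : ∀ i ∈ s₁, A i ⊆ U := fun i hi => Set.subset_biUnion_of_mem hi
      rcases hB with rfl | ⟨i, hi, rfl⟩ <;> rcases hC with rfl | ⟨j, hj, rfl⟩
      · exact absurd rfl hne
      · exact Set.disjoint_compl_left_iff_subset.2 (hsubU j (by exact_mod_cast hj))
      · exact (Set.disjoint_compl_left_iff_subset.2 (hsubU i (by exact_mod_cast hi))).symm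
      · exact hd (hsub (by exact_mod_cast hi)) (hsub (by exact_mod_cast hj))
          (fun h => hne (h ▸ rfl))
    · apply Set.eq_univ_of_univ_subset
      intro t _
      rw [Set.sUnion_eq_biUnion]
      by_cases ht : t ∈ U
      · obtain ⟨i, hi, hti⟩ := Set.mem_iUnion₂.1 ht
        exact Set.mem_biUnion (Finset.mem_coe.2 (hmemP _ (Finset.mem_image_of_mem A hi))) hti
      · exact Set.mem_biUnion (Finset.mem_coe.2 (Finset.mem_insert_self _ _)) ht
  -- sum over s₁ equals sum over image, bounded by sum over P
  have h1 : ∑ B ∈ s₁.image A, ‖μ B‖ = ∑ i ∈ s₁, ‖μ (A i)‖ :=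
    Finset.sum_image (fun i hi j hj h => hinj hi hj h)
  have h2 : ∑ B ∈ s₁.image A, ‖μ B‖ ≤ ∑ B ∈ P, ‖μ B‖ :=
    Finset.sum_le_sum_of_subset_of_nonneg hmemP (fun _ _ _ => norm_nonneg _)
  have h3 : ∑ B ∈ P, ‖μ B‖ ≤ varNorm μ := by
    have hle : ∑ B ∈ P, (‖μ B‖₊ : ENNReal) ≤ evar μ := by
      refine le_iSup₂_of_le P hpart le_rfl
    have hfin : ∑ B ∈ P, (‖μ B‖₊ : ENNReal) ≠ ⊤ := ne_top_of_le_ne_top hμ hle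
    have := ENNReal.toReal_mono hμ hle
    rw [ENNReal.toReal_sum (fun B _ => ENNReal.coe_ne_top)] at this
    · simpa [varNorm] using this
  linarith [h1, h2, h3]

end

end MKAux
namespace MKAux

open MeasureTheory Filter Topology Set

noncomputable section

variable {T : Type*} [MeasurableSpace T] {𝕜 X : Type*} [RCLike 𝕜]
  [NormedAddCommGroup X] [InnerProductSpace 𝕜 X]

local notation "⟪" x ", " y "⟫" => @inner 𝕜 _ _ x y

theorem support_subset_range (μ : VectorMeasure T X) (g : T → X) :
    (Function.support fun x : X => ⟪x, μ (g ⁻¹' {x})⟫) ⊆ Set.range g := by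
  intro x hx
  by_contra hxr
  apply hx
  have : g ⁻¹' {x} = ∅ := by
    ext t; simp only [Set.mem_preimage, Set.mem_singleton_iff, Set.mem_empty_iff_false,
      iff_false]
    exact fun h => hxr ⟨t, h⟩
  show ⟪x, μ (g ⁻¹' {x})⟫ = 0
  rw [this, VectorMeasure.empty, inner_zero_right]

theorem sI_eq_sum (μ : VectorMeasure T X) {g : T → X} (hg : IsSimpleFn g)
    {s : Finset X} (hs : Set.range g ⊆ ↑s) :
    simpleIntegral 𝕜 μ g = ∑ x ∈ s, ⟪x, μ (g ⁻¹' {x})⟫ :=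
  finsum_eq_sum_of_support_subset _ ((support_subset_range μ g).trans hs)

theorem biUnion_preimage_eq_univ {g : T → X} {s : Finset X} (hs : Set.range g ⊆ ↑s) :
    ⋃ x ∈ s, g ⁻¹' {x} = Set.univ := by
  apply Set.eq_univ_of_univ_subset
  intro t _
  exact Set.mem_biUnion (hs ⟨t, rfl⟩) rfl

theorem pairwise_disjoint_preimage (g : T → X) {s : Finset X} :
    (s : Set X).Pairwise (Function.onFun Disjoint fun x => g ⁻¹' {x}) := by
  intro x _ y _ hxy
  exact Set.disjoint_singleton.2 hxy |>.preimage g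

/-- Refinement formula: express the simple integral through a common cell decomposition. -/
theorem sI_pair (μ : VectorMeasure T X) {g h : T → X} (hg : IsSimpleFn g) (hh : IsSimpleFn h)
    {sg sh : Finset X} (hsg : Set.range g ⊆ ↑sg) (hsh : Set.range h ⊆ ↑sh) :
    simpleIntegral 𝕜 μ g
      = ∑ p ∈ sg ×ˢ sh, ⟪p.1, μ (g ⁻¹' {p.1} ∩ h ⁻¹' {p.2})⟫ := by
  rw [sI_eq_sum μ hg hsg, Finset.sum_product]
  refine Finset.sum_congr rfl (fun x _ => ?_)
  have hdecomp : μ (g ⁻¹' {x}) = ∑ y ∈ sh, μ (g ⁻¹' {x} ∩ h ⁻¹' {y}) := by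
    rw [← vm_sum_of_disjoint μ sh (fun y => g ⁻¹' {x} ∩ h ⁻¹' {y})
      (fun y _ => (hg.2 x).inter (hh.2 y))
      (fun y hy z hz hyz => ((pairwise_disjoint_preimage h hy hz hyz).inter_left' _).inter_right' _)]
    congr 1
    rw [← Set.inter_iUnion₂, biUnion_preimage_eq_univ hsh, Set.inter_univ]
  rw [hdecomp, inner_sum]

/-- The key Cauchy-type estimate. -/
theorem sI_sub_norm_le (μ : VectorMeasure T X) (hμ : BddVar μ) {g h : T → X}
    (hg : IsSimpleFn g) (hh : IsSimpleFn h) {ε : ℝ} (hε : 0 ≤ ε)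
    (hb : ∀ t, ‖g t - h t‖ ≤ ε) :
    ‖simpleIntegral 𝕜 μ g - simpleIntegral 𝕜 μ h‖ ≤ ε * varNorm μ := by
  classical
  set sg := hg.1.toFinset
  set sh := hh.1.toFinset
  have hsg : Set.range g ⊆ ↑sg := by simp [sg]
  have hsh : Set.range h ⊆ ↑sh := by simp [sh]
  have e1 := sI_pair (𝕜 := 𝕜) μ hg hh hsg hsh
  have e2 : simpleIntegral 𝕜 μ h
      = ∑ p ∈ sg ×ˢ sh, ⟪p.2, μ (g ⁻¹' {p.1} ∩ h ⁻¹' {p.2})⟫ := by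
    conv_lhs => rw [sI_pair (𝕜 := 𝕜) μ hh hg hsh hsg, Finset.sum_product]
    conv_rhs => rw [Finset.sum_product]
    rw [Finset.sum_comm (s := sh) (t := sg)]
    exact Finset.sum_congr rfl fun x _ => Finset.sum_congr rfl fun y _ => by
      rw [Set.inter_comm]
  rw [e1, e2, ← Finset.sum_sub_distrib]
  have hcell : ∀ p : X × X, MeasurableSet (g ⁻¹' {p.1} ∩ h ⁻¹' {p.2}) :=
    fun p => (hg.2 p.1).inter (hh.2 p.2)
  calc ‖∑ p ∈ sg ×ˢ sh, (⟪p.1, μ (g ⁻¹' {p.1} ∩ h ⁻¹' {p.2})⟫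
          - ⟪p.2, μ (g ⁻¹' {p.1} ∩ h ⁻¹' {p.2})⟫)‖
      ≤ ∑ p ∈ sg ×ˢ sh, ‖⟪p.1, μ (g ⁻¹' {p.1} ∩ h ⁻¹' {p.2})⟫
          - ⟪p.2, μ (g ⁻¹' {p.1} ∩ h ⁻¹' {p.2})⟫‖ := norm_sum_le _ _
    _ ≤ ∑ p ∈ sg ×ˢ sh, ε * ‖μ (g ⁻¹' {p.1} ∩ h ⁻¹' {p.2})‖ := by
        refine Finset.sum_le_sum (fun p _ => ?_)
        rw [← inner_sub_left]
        by_cases hne : (g ⁻¹' {p.1} ∩ h ⁻¹' {p.2}) = ∅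
        · rw [hne, VectorMeasure.empty, inner_zero_right, norm_zero]
          positivity
        · obtain ⟨t, ht⟩ := Set.nonempty_iff_ne_empty.2 hne
          have h1 : g t = p.1 := ht.1
          have h2 : h t = p.2 := ht.2
          calc ‖⟪p.1 - p.2, μ (g ⁻¹' {p.1} ∩ h ⁻¹' {p.2})⟫‖
              ≤ ‖p.1 - p.2‖ * ‖μ (g ⁻¹' {p.1} ∩ h ⁻¹' {p.2})‖ := norm_inner_le_norm _ _
            _ ≤ ε * ‖μ (g ⁻¹' {p.1} ∩ h ⁻¹' {p.2})‖ := by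
                apply mul_le_mul_of_nonneg_right _ (norm_nonneg _)
                rw [← h1, ← h2]; exact hb t
    _ = ε * ∑ p ∈ sg ×ˢ sh, ‖μ (g ⁻¹' {p.1} ∩ h ⁻¹' {p.2})‖ := by
        rw [Finset.mul_sum]
    _ ≤ ε * varNorm μ := by
        apply mul_le_mul_of_nonneg_left _ hε
        refine sum_norm_le_varNorm μ hμ _ _ (fun p _ => hcell p) ?_
        intro p _ q _ hpq
        show Disjoint (g ⁻¹' {p.1} ∩ h ⁻¹' {p.2}) (g ⁻¹' {q.1} ∩ h ⁻¹' {q.2})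
        by_cases h1 : p.1 = q.1
        · have h2 : p.2 ≠ q.2 := fun h2 => hpq (Prod.ext h1 h2)
          exact (Set.disjoint_singleton.2 h2 |>.preimage h).mono
            Set.inter_subset_right Set.inter_subset_right
        · exact (Set.disjoint_singleton.2 h1 |>.preimage g).mono
            Set.inter_subset_left Set.inter_subset_left

theorem isSimpleFn_zero : IsSimpleFn (fun _ : T => (0 : X)) := by
  constructor
  · exact (Set.finite_singleton 0).subset (Set.range_subset_iff.2 fun _ => rfl)
  · intro x
    by_cases hx : (0 : X) = x
    · have : (fun _ : T => (0:X)) ⁻¹' {x} = Set.univ := by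
        ext t; simp [hx]
      rw [this]; exact MeasurableSet.univ
    · have : (fun _ : T => (0:X)) ⁻¹' {x} = ∅ := by
        ext t; simp [hx]
      rw [this]; exact MeasurableSet.empty

theorem sI_zero (μ : VectorMeasure T X) : simpleIntegral 𝕜 μ (fun _ : T => (0 : X)) = 0 := by
  unfold simpleIntegral
  apply finsum_eq_zero_of_forall_eq_zero
  intro x
  by_cases hx : (0 : X) = x
  · rw [← hx, inner_zero_left]
  · have : (fun _ : T => (0:X)) ⁻¹' {x} = ∅ := by ext t; simp [hx]
    rw [this, VectorMeasure.empty, inner_zero_right]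

theorem sI_norm_le (μ : VectorMeasure T X) (hμ : BddVar μ) {g : T → X}
    (hg : IsSimpleFn g) {c : ℝ} (hc : 0 ≤ c) (hb : ∀ t, ‖g t‖ ≤ c) :
    ‖simpleIntegral 𝕜 μ g‖ ≤ c * varNorm μ := by
  have := sI_sub_norm_le (𝕜 := 𝕜) μ hμ hg isSimpleFn_zero hc (by simpa using hb)
  rwa [sI_zero, sub_zero] at this

end

end MKAux
namespace MKAux

open MeasureTheory Filter Topology Set

noncomputable section

variable {T : Type*} [MetricSpace T] [CompactSpace T] [MeasurableSpace T] [BorelSpace T]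
  {𝕜 X : Type*} [RCLike 𝕜] [NormedAddCommGroup X] [InnerProductSpace 𝕜 X]

theorem exists_simple_approx (f : T → X) (hf : Continuous f) {ε : ℝ} (hε : 0 < ε) :
    ∃ g : T → X, IsSimpleFn g ∧ ∀ t, ‖g t - f t‖ ≤ ε := by
  classical
  cases isEmpty_or_nonempty T with
  | inl h =>
    exact ⟨fun _ => 0, isSimpleFn_zero, fun t => (h.false t).elim⟩
  | inr h =>
    have hK : IsCompact (Set.range f) := isCompact_range hf
    obtain ⟨s, hsfin, hscov⟩ := (Metric.totallyBounded_iff).1 hK.totallyBounded ε hε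
    set l : List X := hsfin.toFinset.toList with hl
    have hex : ∀ t : T, ∃ i : ℕ, i < l.length ∧ dist (f t) (l.getD i 0) < ε := by
      intro t
      have hft := hscov ⟨t, rfl⟩
      rw [Set.mem_iUnion₂] at hft
      obtain ⟨y, hy, hyb⟩ := hft
      have hyl : y ∈ l := by
        simp only [hl, Finset.mem_toList, Set.Finite.mem_toFinset]
        exact hy
      obtain ⟨i, hil, hig⟩ := List.mem_iff_getElem.1 hyl
      exact ⟨i, hil, by rw [List.getD_eq_getElem l 0 hil, hig]; exact Metric.mem_ball.1 hyb⟩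
    refine ⟨fun t => l.getD (Nat.find (hex t)) 0, ⟨?_, ?_⟩, ?_⟩
    · refine ((Set.finite_Iio l.length).image (fun i => l.getD i 0)).subset ?_
      rintro _ ⟨t, rfl⟩
      exact ⟨Nat.find (hex t), (Nat.find_spec (hex t)).1, rfl⟩
    · intro x
      have hset : ∀ j : ℕ, MeasurableSet {t : T | j < l.length ∧ dist (f t) (l.getD j 0) < ε} := by
        intro j
        by_cases hj : j < l.length
        · have : {t : T | j < l.length ∧ dist (f t) (l.getD j 0) < ε}
              = f ⁻¹' Metric.ball (l.getD j 0) ε := by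
            ext t; simp [hj, Metric.mem_ball]
          rw [this]
          exact (Metric.isOpen_ball.preimage hf).measurableSet
        · have : {t : T | j < l.length ∧ dist (f t) (l.getD j 0) < ε} = ∅ := by
            ext t; simp [hj]
          rw [this]; exact MeasurableSet.empty
      have hQm : ∀ i : ℕ, MeasurableSet {t : T | Nat.find (hex t) = i} := by
        intro i
        have : {t : T | Nat.find (hex t) = i}
            = {t : T | i < l.length ∧ dist (f t) (l.getD i 0) < ε}
              ∩ ⋂ j < i, {t : T | j < l.length ∧ dist (f t) (l.getD j 0) < ε}ᶜ := by
          ext t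
          simp only [Set.mem_setOf_eq, Set.mem_inter_iff, Set.mem_iInter, Set.mem_compl_iff]
          rw [Nat.find_eq_iff]
        rw [this]
        exact (hset i).inter
          (MeasurableSet.iInter fun j => MeasurableSet.iInter fun _ => (hset j).compl)
      have hpre : (fun t => l.getD (Nat.find (hex t)) 0) ⁻¹' {x}
          = ⋃ i : ℕ, if l.getD i 0 = x then {t : T | Nat.find (hex t) = i} else ∅ := by
        ext t
        simp only [Set.mem_preimage, Set.mem_singleton_iff, Set.mem_iUnion]
        constructor
        · intro hgt
          refine ⟨Nat.find (hex t), ?_⟩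
          rw [if_pos hgt]
          exact rfl
        · rintro ⟨i, hi⟩
          by_cases hxi : l.getD i 0 = x
          · rw [if_pos hxi] at hi
            rw [Set.mem_setOf_eq] at hi
            rw [hi]; exact hxi
          · rw [if_neg hxi] at hi; exact absurd hi (Set.notMem_empty t)
      rw [hpre]
      exact MeasurableSet.iUnion fun i => by
        split_ifs with hc
        · exact hQm i
        · exact MeasurableSet.empty
    · intro t
      calc ‖l.getD (Nat.find (hex t)) 0 - f t‖ = dist (f t) (l.getD (Nat.find (hex t)) 0) := by
            rw [dist_eq_norm, norm_sub_rev]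
        _ ≤ ε := le_of_lt (Nat.find_spec (hex t)).2

/-- A sequence of simple approximations with explicit error `1/(n+1)`. -/
theorem exists_approx_seq (f : T → X) (hf : Continuous f) :
    ∃ g : ℕ → T → X, (∀ n, IsSimpleFn (g n)) ∧ (∀ n t, ‖g n t - f t‖ ≤ 1 / (n + 1)) ∧
      TendstoUniformly g f atTop := by
  have H : ∀ n : ℕ, ∃ g : T → X, IsSimpleFn g ∧ ∀ t, ‖g t - f t‖ ≤ 1 / (n + 1) := fun n =>
    exists_simple_approx f hf (by positivity)
  choose g hg hb using H
  refine ⟨g, hg, hb, ?_⟩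
  rw [Metric.tendstoUniformly_iff]
  intro ε hε
  obtain ⟨N, hN⟩ := exists_nat_one_div_lt hε
  filter_upwards [Filter.eventually_ge_atTop N] with n hn t
  have h1 : (1 : ℝ) / (n + 1) ≤ 1 / (N + 1) := by
    apply one_div_le_one_div_of_le (by positivity)
    exact_mod_cast Nat.succ_le_succ hn
  calc dist (f t) (g n t) = ‖g n t - f t‖ := by rw [dist_eq_norm, norm_sub_rev]
    _ ≤ 1 / (n + 1) := hb n t
    _ < ε := lt_of_le_of_lt h1 hN

end

end MKAux
namespace MKAux

open MeasureTheory Filter Topology Set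

noncomputable section

variable {T : Type*} [MetricSpace T] [CompactSpace T] [MeasurableSpace T] [BorelSpace T]
  {𝕜 X : Type*} [RCLike 𝕜] [NormedAddCommGroup X] [InnerProductSpace 𝕜 X]

theorem uIntegral_eq {μ : VectorMeasure T X} {f : T → X} (hf : Continuous f) {I : 𝕜}
    (hI : HasUIntegral 𝕜 μ f I) : uIntegral 𝕜 μ f = I := by
  obtain ⟨g, hg, _, hgu⟩ := exists_approx_seq f hf
  have hex : ∃ J, HasUIntegral 𝕜 μ f J := ⟨I, hI⟩
  unfold uIntegral
  rw [dif_pos hex]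
  exact tendsto_nhds_unique (hex.choose_spec g hg hgu) (hI g hg hgu)

theorem hasUIntegral_exists {μ : VectorMeasure T X} (hμ : BddVar μ) {f : T → X}
    (hf : Continuous f) : ∃ I : 𝕜, HasUIntegral 𝕜 μ f I := by
  obtain ⟨g, hg, hb, hgu⟩ := exists_approx_seq f hf
  set V := varNorm μ with hV
  have hV0 : 0 ≤ V := ENNReal.toReal_nonneg
  have hcau : CauchySeq (fun n => simpleIntegral 𝕜 μ (g n)) := by
    apply cauchySeq_of_le_tendsto_0 (b := fun N : ℕ => (2 / (N + 1)) * V)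
    · intro n m N hn hm
      rw [dist_eq_norm]
      have hbnd : ∀ t, ‖g n t - g m t‖ ≤ 1 / (N + 1) + 1 / (N + 1) := by
        intro t
        calc ‖g n t - g m t‖ = ‖(g n t - f t) - (g m t - f t)‖ := by
              rw [sub_sub_sub_cancel_right]
          _ ≤ ‖g n t - f t‖ + ‖g m t - f t‖ := norm_sub_le _ _
          _ ≤ 1 / (n + 1) + 1 / (m + 1) := add_le_add (hb n t) (hb m t)
          _ ≤ 1 / (N + 1) + 1 / (N + 1) := by
              refine add_le_add ?_ ?_ <;>
                exact one_div_le_one_div_of_le (by positivity)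
                  (by exact_mod_cast Nat.succ_le_succ (by assumption))
      calc ‖simpleIntegral 𝕜 μ (g n) - simpleIntegral 𝕜 μ (g m)‖
          ≤ (1 / (N + 1) + 1 / (N + 1)) * V :=
            sI_sub_norm_le μ hμ (hg n) (hg m) (by positivity) hbnd
        _ = (2 / (N + 1)) * V := by ring
    · have h2 : Tendsto (fun N : ℕ => (2 * V) * (1 / (N + 1))) atTop (nhds 0) := by
        simpa using tendsto_one_div_add_atTop_nhds_zero_nat.const_mul (2 * V)
      exact h2.congr (fun N => by ring)
  obtain ⟨I, hI⟩ := cauchySeq_tendsto_of_complete hcau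
  refine ⟨I, fun h hh hhu => ?_⟩
  rw [Metric.tendsto_nhds]
  intro ε hε
  have hV1 : (0:ℝ) < V + 1 := by linarith
  set δ := ε / (4 * (V + 1)) with hδ
  have hδ0 : 0 < δ := by positivity
  have e1 : ∀ᶠ n in atTop, ∀ t, dist (f t) (h n t) < δ :=
    (Metric.tendstoUniformly_iff.1 hhu) δ hδ0
  have e2 : ∀ᶠ n : ℕ in atTop, (1:ℝ) / (n + 1) < δ :=
    tendsto_one_div_add_atTop_nhds_zero_nat.eventually_lt_const hδ0
  have e3 : ∀ᶠ n in atTop, dist (simpleIntegral 𝕜 μ (g n)) I < ε / 2 :=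
    (Metric.tendsto_nhds.1 hI) (ε / 2) (by positivity)
  filter_upwards [e1, e2, e3] with n h1 h2 h3
  have hbnd : ∀ t, ‖h n t - g n t‖ ≤ δ + δ := by
    intro t
    calc ‖h n t - g n t‖ = ‖(h n t - f t) - (g n t - f t)‖ := by
          rw [sub_sub_sub_cancel_right]
      _ ≤ ‖h n t - f t‖ + ‖g n t - f t‖ := norm_sub_le _ _
      _ ≤ δ + δ := by
          refine add_le_add ?_ (le_trans (hb n t) (le_of_lt h2))
          have := h1 t
          rw [dist_comm, dist_eq_norm] at this
          exact this.le
  have hd1 : dist (simpleIntegral 𝕜 μ (h n)) (simpleIntegral 𝕜 μ (g n)) ≤ (δ + δ) * V := by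
    rw [dist_eq_norm]
    exact sI_sub_norm_le μ hμ (hh n) (hg n) (by positivity) hbnd
  have hd2 : (δ + δ) * V < ε / 2 := by
    have hlt : (δ + δ) * V < (δ + δ) * (V + 1) :=
      mul_lt_mul_of_pos_left (lt_add_one V) (by positivity)
    have heq : (δ + δ) * (V + 1) = ε / 2 := by
      field_simp [hδ]
      rw [hδ]; linear_combination (div_mul_cancel₀ ε (ne_of_gt (by linarith : (0:ℝ) < 4 * (V + 1))))
    linarith
  calc dist (simpleIntegral 𝕜 μ (h n)) I
      ≤ dist (simpleIntegral 𝕜 μ (h n)) (simpleIntegral 𝕜 μ (g n))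
        + dist (simpleIntegral 𝕜 μ (g n)) I := dist_triangle _ _ _
    _ < ε / 2 + ε / 2 := add_lt_add_of_le_of_lt (le_of_lt (lt_of_le_of_lt hd1 hd2)) h3
    _ = ε := by ring

theorem hasUIntegral_uIntegral {μ : VectorMeasure T X} (hμ : BddVar μ) {f : T → X}
    (hf : Continuous f) : HasUIntegral 𝕜 μ f (uIntegral 𝕜 μ f) := by
  obtain ⟨I, hI⟩ := hasUIntegral_exists (𝕜 := 𝕜) hμ hf
  rw [uIntegral_eq hf hI]
  exact hI

/-- A norm bound for the uniform integral. -/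
theorem norm_uIntegral_le {μ : VectorMeasure T X} (hμ : BddVar μ) {f : T → X}
    (hf : Continuous f) {c : ℝ} (hc : 0 ≤ c) (hb : ∀ t, ‖f t‖ ≤ c) :
    ‖uIntegral 𝕜 μ f‖ ≤ c * varNorm μ := by
  obtain ⟨g, hg, hgb, hgu⟩ := exists_approx_seq f hf
  have hI := hasUIntegral_uIntegral (𝕜 := 𝕜) hμ hf g hg hgu
  have hnorm : Tendsto (fun n => ‖simpleIntegral 𝕜 μ (g n)‖) atTop
      (nhds ‖uIntegral 𝕜 μ f‖) := hI.norm
  have hub : ∀ n : ℕ, ‖simpleIntegral 𝕜 μ (g n)‖ ≤ (c + 1 / (n + 1)) * varNorm μ := by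
    intro n
    refine sI_norm_le μ hμ (hg n) (by positivity) (fun t => ?_)
    calc ‖g n t‖ ≤ ‖f t‖ + ‖g n t - f t‖ := by
          have := norm_add_le (f t) (g n t - f t)
          simpa using this
      _ ≤ c + 1 / (n + 1) := add_le_add (hb t) (hgb n t)
  have hlim : Tendsto (fun n : ℕ => (c + 1 / (n + 1)) * varNorm μ) atTop
      (nhds (c * varNorm μ)) := by
    have h1 : Tendsto (fun n : ℕ => c + 1 / (n + 1)) atTop (nhds (c + 0)) :=
      tendsto_const_nhds.add tendsto_one_div_add_atTop_nhds_zero_nat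
    rw [add_zero] at h1
    exact h1.mul_const _
  exact le_of_tendsto_of_tendsto hnorm hlim (Eventually.of_forall hub)

end

end MKAux
namespace MKAux

open MeasureTheory Filter Topology Set

noncomputable section

variable {T : Type*} [MeasurableSpace T] {𝕜 X : Type*} [RCLike 𝕜]
  [NormedAddCommGroup X] [InnerProductSpace 𝕜 X]

local notation "⟪" x ", " y "⟫" => @inner 𝕜 _ _ x y

theorem simpleFn_comp {g : T → X} (hg : IsSimpleFn g) {ω : T → T} (hω : Measurable ω) :
    IsSimpleFn (g ∘ ω) :=
  ⟨hg.1.subset (Set.range_comp_subset_range ω g), fun x => hω (hg.2 x)⟩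

theorem simpleFn_postcomp {g : T → X} (hg : IsSimpleFn g) (φ : X → X) :
    IsSimpleFn (φ ∘ g) := by
  classical
  refine ⟨(hg.1.image φ).subset (by rw [Set.range_comp]), ?_⟩
  intro y
  have hpre : (φ ∘ g) ⁻¹' {y} = ⋃ x ∈ hg.1.toFinset.filter (fun x => φ x = y), g ⁻¹' {x} := by
    ext t
    simp only [Set.mem_preimage, Function.comp_apply, Set.mem_singleton_iff, Set.mem_iUnion,
      Finset.mem_filter, Set.Finite.mem_toFinset]
    constructor
    · intro h
      exact ⟨g t, ⟨⟨t, rfl⟩, h⟩, rfl⟩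
    · rintro ⟨x, ⟨_, hφ⟩, hx⟩
      show φ (g t) = y
      rw [hx]; exact hφ
  rw [hpre]
  exact Finset.measurableSet_biUnion _ (fun x _ => hg.2 x)

theorem vm_finset_sum_apply {ι : Type*} (s : Finset ι) (ν : ι → VectorMeasure T X) (A : Set T) :
    (∑ i ∈ s, ν i) A = ∑ i ∈ s, ν i A := by
  classical
  induction s using Finset.induction_on with
  | empty => simp
  | insert _ _ hx ih =>
    rename_i a s
    rw [Finset.sum_insert hx, Finset.sum_insert hx, VectorMeasure.add_apply, ih]

theorem sI_sum_measures {ι : Type*} (s : Finset ι) (ν : ι → VectorMeasure T X) {g : T → X}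
    (hg : IsSimpleFn g) :
    simpleIntegral 𝕜 (∑ i ∈ s, ν i) g = ∑ i ∈ s, simpleIntegral 𝕜 (ν i) g := by
  classical
  have hS : Set.range g ⊆ ↑hg.1.toFinset := by simp
  rw [sI_eq_sum _ hg hS]
  have : ∀ i ∈ s, simpleIntegral 𝕜 (ν i) g = ∑ x ∈ hg.1.toFinset, ⟪x, ν i (g ⁻¹' {x})⟫ :=
    fun i _ => sI_eq_sum _ hg hS
  rw [Finset.sum_congr rfl this, Finset.sum_comm]
  refine Finset.sum_congr rfl (fun x _ => ?_)
  rw [vm_finset_sum_apply, inner_sum]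

theorem sI_opComp_map [CompleteSpace X] (μ : VectorMeasure T X) (Rop : X →L[𝕜] X)
    {ω : T → T} (hω : Measurable ω) {g : T → X} (hg : IsSimpleFn g) :
    simpleIntegral 𝕜 (opComp Rop (μ.map ω)) g
      = simpleIntegral 𝕜 μ ((ContinuousLinearMap.adjoint Rop : X →L[𝕜] X) ∘ (g ∘ ω)) := by
  classical
  set φ : X → X := ⇑(ContinuousLinearMap.adjoint Rop : X →L[𝕜] X) with hφ
  set h : T → X := g ∘ ω with hh
  have hhs : IsSimpleFn h := simpleFn_comp hg hω
  set S : Finset X := hg.1.toFinset with hSdef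
  have hS : Set.range g ⊆ ↑S := by simp [hSdef]
  have hhr : Set.range h ⊆ ↑S := (Set.range_comp_subset_range ω g).trans hS
  -- LHS
  have lhs_eq : simpleIntegral 𝕜 (opComp Rop (μ.map ω)) g
      = ∑ x ∈ S, ⟪φ x, μ (h ⁻¹' {x})⟫ := by
    rw [sI_eq_sum _ hg hS]
    refine Finset.sum_congr rfl (fun x _ => ?_)
    have h1 : (opComp Rop (μ.map ω)) (g ⁻¹' {x}) = Rop ((μ.map ω) (g ⁻¹' {x})) := rfl
    rw [h1, VectorMeasure.map_apply _ hω (hg.2 x)]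
    exact (ContinuousLinearMap.adjoint_inner_left Rop _ x).symm
  -- RHS
  have rhs_eq : simpleIntegral 𝕜 μ (φ ∘ h) = ∑ x ∈ S, ⟪φ x, μ (h ⁻¹' {x})⟫ := by
    have hφh : IsSimpleFn (φ ∘ h) := simpleFn_postcomp hhs φ
    have hrange : Set.range (φ ∘ h) ⊆ ↑(S.image φ) := by
      rw [Set.range_comp]
      rintro y ⟨x, hx, rfl⟩
      exact Finset.mem_coe.2 (Finset.mem_image_of_mem φ (Finset.mem_coe.1 (hhr hx)))
    rw [sI_eq_sum _ hφh hrange]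
    have hdecomp : ∀ y, (φ ∘ h) ⁻¹' {y} = ⋃ x ∈ S.filter (fun x => φ x = y), h ⁻¹' {x} := by
      intro y
      ext t
      simp only [Set.mem_preimage, Function.comp_apply, Set.mem_singleton_iff, Set.mem_iUnion,
        Finset.mem_filter]
      constructor
      · intro hy
        exact ⟨h t, ⟨Finset.mem_coe.1 (hhr ⟨t, rfl⟩), hy⟩, rfl⟩
      · rintro ⟨x, ⟨_, hφx⟩, hx⟩
        show φ (h t) = y
        rw [hx]; exact hφx
    have step : ∀ y ∈ S.image φ, ⟪y, μ ((φ ∘ h) ⁻¹' {y})⟫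
        = ∑ x ∈ S.filter (fun x => φ x = y), ⟪φ x, μ (h ⁻¹' {x})⟫ := by
      intro y _
      rw [hdecomp y, vm_sum_of_disjoint μ _ _ (fun x _ => hhs.2 x)
        ((pairwise_disjoint_preimage h).mono (by simp [Set.subset_def] <;> tauto)),
        inner_sum]
      refine Finset.sum_congr rfl (fun x hx => ?_)
      rw [(Finset.mem_filter.1 hx).2]
    rw [Finset.sum_congr rfl step]
    exact Finset.sum_fiberwise_of_maps_to (fun x _ => Finset.mem_image_of_mem φ (by assumption))
      (fun x => ⟪φ x, μ (h ⁻¹' {x})⟫)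
  rw [lhs_eq, ← rhs_eq]

theorem sI_real_smul (μ : VectorMeasure T X) {g : T → X} (hg : IsSimpleFn g) {c : ℝ}
    (hc : c ≠ 0) :
    simpleIntegral 𝕜 μ (fun t => ((c : 𝕜)) • g t) = (c : 𝕜) * simpleIntegral 𝕜 μ g := by
  have hck : (c : 𝕜) ≠ 0 := by exact_mod_cast hc
  set e : X ≃ X :=
    { toFun := fun y => (c : 𝕜) • y
      invFun := fun y => (c : 𝕜)⁻¹ • y
      left_inv := fun y => by
        show (c : 𝕜)⁻¹ • (c : 𝕜) • y = y
        rw [smul_smul, inv_mul_cancel₀ hck, one_smul]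
      right_inv := fun y => by
        show (c : 𝕜) • (c : 𝕜)⁻¹ • y = y
        rw [smul_smul, mul_inv_cancel₀ hck, one_smul] } with he
  unfold simpleIntegral
  rw [← finsum_comp_equiv e]
  have hpre : ∀ y : X, (fun t => (c : 𝕜) • g t) ⁻¹' {e y} = g ⁻¹' {y} := by
    intro y
    ext t
    simp only [Set.mem_preimage, Set.mem_singleton_iff, he, Equiv.coe_fn_mk]
    exact smul_right_injective X hck |>.eq_iff
  have hcongr : ∀ y : X, ⟪e y, μ ((fun t => (c : 𝕜) • g t) ⁻¹' {e y})⟫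
      = (c : 𝕜) * ⟪y, μ (g ⁻¹' {y})⟫ := by
    intro y
    rw [hpre y]
    show ⟪(c : 𝕜) • y, μ (g ⁻¹' {y})⟫ = (c : 𝕜) * ⟪y, μ (g ⁻¹' {y})⟫
    rw [inner_smul_left, RCLike.conj_ofReal]
  rw [finsum_congr hcongr]
  exact (mul_finsum _ _).symm

theorem sI_add_const (μ : VectorMeasure T X) {g : T → X} (hg : IsSimpleFn g) (c : X) :
    simpleIntegral 𝕜 μ (fun t => g t + c)
      = simpleIntegral 𝕜 μ g + ⟪c, μ Set.univ⟫ := by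
  classical
  set e : X ≃ X := Equiv.addRight c with he
  unfold simpleIntegral
  rw [← finsum_comp_equiv e]
  have hpre : ∀ y : X, (fun t => g t + c) ⁻¹' {e y} = g ⁻¹' {y} := by
    intro y
    ext t
    simp only [Set.mem_preimage, Set.mem_singleton_iff, he, Equiv.coe_addRight]
    exact add_left_injective c |>.eq_iff
  have hcongr : ∀ y : X, ⟪e y, μ ((fun t => g t + c) ⁻¹' {e y})⟫
      = ⟪y, μ (g ⁻¹' {y})⟫ + ⟪c, μ (g ⁻¹' {y})⟫ := by
    intro y
    rw [hpre y]
    show ⟪y + c, μ (g ⁻¹' {y})⟫ = _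
    rw [inner_add_left]
  rw [finsum_congr hcongr]
  have hsupp2 : (Function.support fun y : X => ⟪c, μ (g ⁻¹' {y})⟫).Finite := by
    refine hg.1.subset ?_
    intro y hy
    by_contra hyr
    apply hy
    have : g ⁻¹' {y} = ∅ := by
      ext t; simp only [Set.mem_preimage, Set.mem_singleton_iff, Set.mem_empty_iff_false,
        iff_false]
      exact fun h => hyr ⟨t, h⟩
    show ⟪c, μ (g ⁻¹' {y})⟫ = 0
    rw [this, VectorMeasure.empty, inner_zero_right]
  rw [finsum_add_distrib (hg.1.subset (support_subset_range μ g)) hsupp2]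
  congr 1
  have hS : Set.range g ⊆ ↑hg.1.toFinset := by simp
  have h1 : ∑ᶠ y : X, ⟪c, μ (g ⁻¹' {y})⟫ = ∑ y ∈ hg.1.toFinset, ⟪c, μ (g ⁻¹' {y})⟫ := by
    apply finsum_eq_sum_of_support_subset
    exact (fun y hy => hS (by
      by_contra hyr
      apply hy
      have : g ⁻¹' {y} = ∅ := by
        ext t; simp only [Set.mem_preimage, Set.mem_singleton_iff, Set.mem_empty_iff_false,
          iff_false]
        exact fun h => hyr ⟨t, h⟩
      show ⟪c, μ (g ⁻¹' {y})⟫ = 0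
      rw [this, VectorMeasure.empty, inner_zero_right]))
  rw [h1, ← inner_sum, ← vm_sum_of_disjoint μ _ _ (fun y _ => hg.2 y)
    (pairwise_disjoint_preimage g), biUnion_preimage_eq_univ hS]

end

end MKAux
namespace MKAux

open MeasureTheory Filter Topology Set

noncomputable section

variable {T : Type*} [MetricSpace T] [CompactSpace T] [MeasurableSpace T] [BorelSpace T]
  {𝕜 X : Type*} [RCLike 𝕜] [NormedAddCommGroup X] [InnerProductSpace 𝕜 X]

local notation "⟪" x ", " y "⟫" => @inner 𝕜 _ _ x y

theorem tendsto_sI_zero {μ : VectorMeasure T X} (hμ : BddVar μ) {k : ℕ → T → X}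
    (hk : ∀ n, IsSimpleFn (k n))
    (hku : TendstoUniformly k (fun _ => (0 : X)) atTop) :
    Tendsto (fun n => simpleIntegral 𝕜 μ (k n)) atTop (nhds 0) := by
  rw [Metric.tendsto_nhds]
  intro ε hε
  set V := varNorm μ with hV
  have hV0 : 0 ≤ V := ENNReal.toReal_nonneg
  have hV1 : (0:ℝ) < V + 1 := by linarith
  set δ := ε / (2 * (V + 1)) with hδ
  have hδ0 : 0 < δ := by positivity
  filter_upwards [(Metric.tendstoUniformly_iff.1 hku) δ hδ0] with n h1
  rw [dist_zero_right]
  have hb : ∀ t, ‖k n t‖ ≤ δ := fun t => by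
    have := h1 t
    rw [dist_comm, dist_eq_norm, sub_zero] at this
    exact this.le
  have hle : ‖simpleIntegral 𝕜 μ (k n)‖ ≤ δ * V := sI_norm_le μ hμ (hk n) hδ0.le hb
  have hlt : δ * V < δ * (V + 1) := mul_lt_mul_of_pos_left (lt_add_one V) hδ0
  have heq : δ * (V + 1) = ε / 2 := by
    field_simp [hδ]
    rw [hδ]; linear_combination (div_mul_cancel₀ ε (ne_of_gt (by linarith : (0:ℝ) < 2 * (V + 1))))
  linarith

theorem hasUIntegral_const {μ : VectorMeasure T X} (hμ : BddVar μ) (c : X) :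
    HasUIntegral 𝕜 μ (fun _ => c) ⟪c, μ Set.univ⟫ := by
  intro k hk hku
  have hsub : ∀ n, IsSimpleFn (fun t => k n t - c) := fun n =>
    simpleFn_postcomp (hk n) (fun y => y - c)
  have hconv : TendstoUniformly (fun n t => k n t - c) (fun _ => (0 : X)) atTop := by
    have hUC : UniformContinuous (fun y : X => y - c) :=
      uniformContinuous_id.sub uniformContinuous_const
    have := hUC.comp_tendstoUniformly hku
    simpa [Function.comp_def] using this
  have h0 := tendsto_sI_zero (𝕜 := 𝕜) hμ hsub hconv
  have heq : ∀ n, simpleIntegral 𝕜 μ (k n)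
      = simpleIntegral 𝕜 μ (fun t => k n t - c) + ⟪c, μ Set.univ⟫ := by
    intro n
    have h := (sI_add_const (𝕜 := 𝕜) μ (hsub n) c).symm
    have h2 : (fun t => (k n t - c) + c) = k n := by funext t; rw [sub_add_cancel]
    rw [h2] at h
    exact h.symm
  have := h0.add_const (⟪c, μ Set.univ⟫)
  rw [zero_add] at this
  exact this.congr (fun n => (heq n).symm)

theorem uIntegral_add_const {μ : VectorMeasure T X} (hμ : BddVar μ) {f : T → X}
    (hf : Continuous f) (c : X) :
    uIntegral 𝕜 μ (fun t => f t + c) = uIntegral 𝕜 μ f + ⟪c, μ Set.univ⟫ := by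
  refine uIntegral_eq (hf.add continuous_const) ?_
  intro k hk hku
  have hsub : ∀ n, IsSimpleFn (fun t => k n t - c) := fun n =>
    simpleFn_postcomp (hk n) (fun y => y - c)
  have hconv : TendstoUniformly (fun n t => k n t - c) f atTop := by
    have hUC : UniformContinuous (fun y : X => y - c) :=
      uniformContinuous_id.sub uniformContinuous_const
    have := hUC.comp_tendstoUniformly hku
    simpa [Function.comp_def] using this
  have h1 := hasUIntegral_uIntegral (𝕜 := 𝕜) hμ hf (fun n t => k n t - c) hsub hconv
  have heq : ∀ n, simpleIntegral 𝕜 μ (k n)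
      = simpleIntegral 𝕜 μ (fun t => k n t - c) + ⟪c, μ Set.univ⟫ := by
    intro n
    have h := (sI_add_const (𝕜 := 𝕜) μ (hsub n) c).symm
    have h2 : (fun t => (k n t - c) + c) = k n := by funext t; rw [sub_add_cancel]
    rw [h2] at h
    exact h.symm
  exact (h1.add_const _).congr (fun n => (heq n).symm)

theorem bddAbove_mkNormStar_set (μ : VectorMeasure T X) (hμ : BddVar μ)
    (h0 : μ Set.univ = 0) :
    BddAbove {s | ∃ f : T → X, LipschitzWith 1 f ∧ s = ‖uIntegral 𝕜 μ f‖} := by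
  cases isEmpty_or_nonempty T with
  | inl hT =>
    refine ⟨Metric.diam (Set.univ : Set T) * varNorm μ, ?_⟩
    rintro s ⟨f, hf, rfl⟩
    have h1 := norm_uIntegral_le (𝕜 := 𝕜) hμ hf.continuous (le_refl (0:ℝ))
      (fun t => (hT.false t).elim)
    rw [zero_mul] at h1
    exact h1.trans (mul_nonneg Metric.diam_nonneg ENNReal.toReal_nonneg)
  | inr hT =>
    refine ⟨Metric.diam (Set.univ : Set T) * varNorm μ, ?_⟩
    rintro s ⟨f, hf, rfl⟩
    set t₀ : T := Classical.arbitrary T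
    have key : uIntegral 𝕜 μ f = uIntegral 𝕜 μ (fun t => f t - f t₀) := by
      have hcont : Continuous (fun t => f t - f t₀) := hf.continuous.sub continuous_const
      have := uIntegral_add_const (𝕜 := 𝕜) hμ hcont (f t₀)
      rw [h0, inner_zero_right, add_zero] at this
      rw [← this]
      congr 1
      funext t
      rw [sub_add_cancel]
    rw [key]
    have hbd : ∀ t, ‖f t - f t₀‖ ≤ Metric.diam (Set.univ : Set T) := by
      intro t
      have h1 : dist (f t) (f t₀) ≤ 1 * dist t t₀ := by
        simpa using hf.dist_le_mul t t₀
      rw [one_mul] at h1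
      rw [← dist_eq_norm]
      exact h1.trans (Metric.dist_le_diam_of_mem isCompact_univ.isBounded
        (Set.mem_univ t) (Set.mem_univ t₀))
    exact norm_uIntegral_le hμ (hf.continuous.sub continuous_const) Metric.diam_nonneg hbd

theorem norm_uIntegral_le_mkNormStar (μ : VectorMeasure T X) (hμ : BddVar μ)
    (h0 : μ Set.univ = 0) {f : T → X} (hf : LipschitzWith 1 f) :
    ‖uIntegral 𝕜 μ f‖ ≤ mkNormStar 𝕜 μ :=
  le_csSup (bddAbove_mkNormStar_set μ hμ h0) ⟨f, hf, rfl⟩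

theorem mkNormStar_nonneg (μ : VectorMeasure T X) (hμ : BddVar μ) (h0 : μ Set.univ = 0) :
    0 ≤ mkNormStar 𝕜 μ :=
  (norm_nonneg _).trans
    (norm_uIntegral_le_mkNormStar (𝕜 := 𝕜) μ hμ h0 ((LipschitzWith.const (0 : X)).weaken zero_le_one))

/-- The fundamental Lipschitz bound for the uniform integral. -/
theorem norm_uIntegral_le_lipschitz (μ : VectorMeasure T X) (hμ : BddVar μ)
    (h0 : μ Set.univ = 0) {h : T → X} {L : NNReal} (hL : LipschitzWith L h) :
    ‖uIntegral 𝕜 μ h‖ ≤ (L : ℝ) * mkNormStar 𝕜 μ := by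
  cases isEmpty_or_nonempty T with
  | inl hT =>
    have h1 := norm_uIntegral_le (𝕜 := 𝕜) hμ hL.continuous (le_refl (0:ℝ))
      (fun t => (hT.false t).elim)
    rw [zero_mul] at h1
    exact h1.trans (mul_nonneg L.2 (mkNormStar_nonneg μ hμ h0))
  | inr hT =>
    by_cases hL0 : L = 0
    · -- h is constant
      subst hL0
      set t₀ : T := Classical.arbitrary T
      have hconst : h = fun _ => h t₀ := by
        funext t
        have := hL.dist_le_mul t t₀
        simp only [NNReal.coe_zero, zero_mul] at this
        exact dist_le_zero.1 this
      have : uIntegral 𝕜 μ h = ⟪h t₀, μ Set.univ⟫ := by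
        rw [hconst]
        exact uIntegral_eq continuous_const (hasUIntegral_const hμ (h t₀))
      rw [this, h0, inner_zero_right, norm_zero, NNReal.coe_zero, zero_mul]
    · set c : ℝ := (L : ℝ) with hcdef
      have hc : 0 < c := NNReal.coe_pos.2 (pos_iff_ne_zero.2 hL0)
      set f : T → X := fun t => ((c⁻¹ : ℝ) : 𝕜) • h t with hfdef
      have hf1 : LipschitzWith 1 f := by
        apply LipschitzWith.of_dist_le_mul
        intro s t
        rw [NNReal.coe_one, one_mul, dist_eq_norm]
        show ‖((c⁻¹ : ℝ) : 𝕜) • h s - ((c⁻¹ : ℝ) : 𝕜) • h t‖ ≤ dist s t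
        rw [← smul_sub, norm_smul, RCLike.norm_ofReal, abs_of_pos (by positivity)]
        have hd := hL.dist_le_mul s t
        rw [dist_eq_norm] at hd
        calc c⁻¹ * ‖h s - h t‖ ≤ c⁻¹ * (c * dist s t) :=
              mul_le_mul_of_nonneg_left hd (by positivity)
          _ = dist s t := by field_simp
      have hfc : Continuous f := continuous_const.smul hL.continuous
      have hval : uIntegral 𝕜 μ f = ((c⁻¹ : ℝ) : 𝕜) * uIntegral 𝕜 μ h := by
        refine uIntegral_eq hfc ?_
        intro k hk hku
        have hks : ∀ n, IsSimpleFn (fun t => ((c : ℝ) : 𝕜) • k n t) := fun n =>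
          simpleFn_postcomp (hk n) (fun y => ((c : ℝ) : 𝕜) • y)
        have hkuc : TendstoUniformly (fun n t => ((c : ℝ) : 𝕜) • k n t) h atTop := by
          have hUC : UniformContinuous (fun y : X => ((c : ℝ) : 𝕜) • y) :=
            (ContinuousLinearMap.lsmul 𝕜 𝕜 ((c : 𝕜))).uniformContinuous
          have h2 := hUC.comp_tendstoUniformly hku
          have h3 : (fun y : X => ((c : ℝ) : 𝕜) • y) ∘ f = h := by
            funext t
            show ((c : ℝ) : 𝕜) • (((c⁻¹ : ℝ) : 𝕜) • h t) = h t
            rw [smul_smul, ← RCLike.ofReal_mul, mul_inv_cancel₀ hc.ne', RCLike.ofReal_one,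
              one_smul]
          rw [h3] at h2
          exact h2
        have hI := hasUIntegral_uIntegral (𝕜 := 𝕜) hμ hL.continuous
          (fun n t => ((c : ℝ) : 𝕜) • k n t) hks hkuc
        have h4 := hI.const_mul (((c⁻¹ : ℝ) : 𝕜))
        refine h4.congr (fun n => ?_)
        rw [sI_real_smul μ (hk n) hc.ne', ← mul_assoc, ← RCLike.ofReal_mul,
          inv_mul_cancel₀ hc.ne', RCLike.ofReal_one, one_mul]
      have hle := norm_uIntegral_le_mkNormStar (𝕜 := 𝕜) μ hμ h0 hf1
      rw [hval, norm_mul, RCLike.norm_ofReal, abs_of_pos (by positivity)] at hle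
      calc ‖uIntegral 𝕜 μ h‖ = c * (c⁻¹ * ‖uIntegral 𝕜 μ h‖) := by field_simp
        _ ≤ c * mkNormStar 𝕜 μ := mul_le_mul_of_nonneg_left hle hc.le

theorem hasUIntegral_markovH [CompleteSpace X] {M : ℕ} (R : Fin M → X →L[𝕜] X)
    (ω : Fin M → T → T) (hω : ∀ i, Continuous (ω i)) (μ : VectorMeasure T X)
    (hμ : BddVar μ) {f : T → X} (hf : Continuous f) :
    HasUIntegral 𝕜 (markovH R ω μ) f
      (∑ i, uIntegral 𝕜 μ
        ((ContinuousLinearMap.adjoint (R i) : X →L[𝕜] X) ∘ (f ∘ ω i))) := by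
  intro g hg hgu
  have key : ∀ n, simpleIntegral 𝕜 (markovH R ω μ) (g n)
      = ∑ i, simpleIntegral 𝕜 μ
          ((ContinuousLinearMap.adjoint (R i) : X →L[𝕜] X) ∘ (g n ∘ ω i)) := by
    intro n
    rw [markovH, sI_sum_measures _ _ (hg n)]
    exact Finset.sum_congr rfl fun i _ =>
      sI_opComp_map μ (R i) (hω i).measurable (hg n)
  have hterm : ∀ i : Fin M,
      Tendsto (fun n => simpleIntegral 𝕜 μ
          ((ContinuousLinearMap.adjoint (R i) : X →L[𝕜] X) ∘ (g n ∘ ω i))) atTop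
        (nhds (uIntegral 𝕜 μ
          ((ContinuousLinearMap.adjoint (R i) : X →L[𝕜] X) ∘ (f ∘ ω i)))) := by
    intro i
    set A := (ContinuousLinearMap.adjoint (R i) : X →L[𝕜] X)
    have hcont : Continuous (⇑A ∘ (f ∘ ω i)) := A.continuous.comp (hf.comp (hω i))
    refine hasUIntegral_uIntegral (𝕜 := 𝕜) hμ hcont _ ?_ ?_
    · exact fun n => simpleFn_postcomp (simpleFn_comp (hg n) (hω i).measurable) ⇑A
    · have h1 : TendstoUniformly (fun n => g n ∘ ω i) (f ∘ ω i) atTop := hgu.comp (ω i)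
      exact A.uniformContinuous.comp_tendstoUniformly h1
  exact Tendsto.congr (fun n => (key n).symm) (tendsto_finset_sum _ (fun i _ => hterm i))

end

end MKAux
/-- if `μ(T) = 0` then `H(μ)(T) = 0`, so `H` restricts to `cabv(X,0)`, and
for the modified Monge–Kantorovich norm `‖H(μ)‖*_MK ≤ (∑ ‖R_i‖ r_i) ‖μ‖*_MK`. -/
theorem markovH_mkNormStar_bound
    {T : Type*} [MetricSpace T] [CompactSpace T] [MeasurableSpace T] [BorelSpace T]
    {𝕜 X : Type*} [RCLike 𝕜] [NormedAddCommGroup X] [InnerProductSpace 𝕜 X] [CompleteSpace X]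
    {M : ℕ} (ω : Fin M → T → T) (r : Fin M → NNReal)
    (hω : ∀ i, LipschitzWith (r i) (ω i)) (R : Fin M → X →L[𝕜] X)
    (μ : VectorMeasure T X) (hμ : BddVar μ) (h0 : μ Set.univ = 0) :
    (markovH R ω μ) Set.univ = 0 ∧
      mkNormStar 𝕜 (markovH R ω μ) ≤ (∑ i, ‖R i‖ * (r i : ℝ)) * mkNormStar 𝕜 μ := by
  classical
  have hωm : ∀ i, Measurable (ω i) := fun i => (hω i).continuous.measurable
  constructor
  · show (∑ i, opComp (R i) (μ.map (ω i))) Set.univ = 0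
    rw [MKAux.vm_finset_sum_apply]
    refine Finset.sum_eq_zero fun i _ => ?_
    show (R i) ((μ.map (ω i)) Set.univ) = 0
    rw [VectorMeasure.map_apply _ (hωm i) MeasurableSet.univ, Set.preimage_univ, h0,
      map_zero]
  · set C : ℝ := ∑ i, ‖R i‖ * (r i : ℝ) with hC
    have hC0 : 0 ≤ C := Finset.sum_nonneg fun i _ => mul_nonneg (norm_nonneg _) (r i).2
    have hmk0 : 0 ≤ mkNormStar 𝕜 μ := MKAux.mkNormStar_nonneg μ hμ h0
    show sSup {s | ∃ f : T → X, LipschitzWith 1 f ∧ s = ‖uIntegral 𝕜 (markovH R ω μ) f‖}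
      ≤ C * mkNormStar 𝕜 μ
    apply Real.sSup_le _ (mul_nonneg hC0 hmk0)
    rintro s ⟨f, hf1, rfl⟩
    have hHI := MKAux.hasUIntegral_markovH R ω (fun i => (hω i).continuous) μ hμ
      hf1.continuous
    rw [MKAux.uIntegral_eq hf1.continuous hHI]
    calc ‖∑ i, uIntegral 𝕜 μ
            ((ContinuousLinearMap.adjoint (R i) : X →L[𝕜] X) ∘ (f ∘ ω i))‖
        ≤ ∑ i, ‖uIntegral 𝕜 μ
            ((ContinuousLinearMap.adjoint (R i) : X →L[𝕜] X) ∘ (f ∘ ω i))‖ :=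
          norm_sum_le _ _
      _ ≤ ∑ i, (‖R i‖ * (r i : ℝ)) * mkNormStar 𝕜 μ := by
          refine Finset.sum_le_sum fun i _ => ?_
          have hlip : LipschitzWith
              (‖(ContinuousLinearMap.adjoint (R i) : X →L[𝕜] X)‖₊ * (1 * r i))
              ((ContinuousLinearMap.adjoint (R i) : X →L[𝕜] X) ∘ (f ∘ ω i)) :=
            ((ContinuousLinearMap.adjoint (R i)).lipschitz).comp (hf1.comp (hω i))
          refine (MKAux.norm_uIntegral_le_lipschitz μ hμ h0 hlip).trans
            (mul_le_mul_of_nonneg_right ?_ hmk0)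
          have hadj : ‖(ContinuousLinearMap.adjoint (R i) : X →L[𝕜] X)‖ = ‖R i‖ :=
            LinearIsometryEquiv.norm_map ContinuousLinearMap.adjoint (R i)
          rw [NNReal.coe_mul, NNReal.coe_mul, NNReal.coe_one, one_mul, coe_nnnorm, hadj]
      _ = C * mkNormStar 𝕜 μ := by rw [← Finset.sum_mul]
end
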